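/- Let V be a finite set with |V| = v, let t be a positive integer, and let 𝓑 be a nonempty finite family of distinct subsets of V (blocks) such that for every integer t' with 0 ≤ t' ≤ t there is a number λ_{t'} so that every t'-element subset of V is contained in exactly λ_{t'} blocks. Let K be the set of block sizes and, for k ∈ K, let 𝓑_k be the set of blocks of size k. Let α ≠ β be real numbers and, for S ⊆ V, let χ_S ∈ ℝ^V be the vector with coordinate α at points of S and β elsewhere. Then for every real polynomial f in v variables of total degree at most t, ∑_{k ∈ K} (|𝓑_k|/(|𝓑|·C(v,k))) ∑_{S ⊆ V, |S| = k} f(χ_S) = (1/|𝓑|) ∑_{b ∈ 𝓑} f(χ_b), where C(v,k) is the binomial coefficient. -/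

import Mathlib

open Finset

section Aux

variable {V : Type*} [Fintype V] [DecidableEq V]

/-- coefficient function for the indicator decomposition -/
noncomputable def cfun (α β : ℝ) (f : MvPolynomial V ℝ) (A : Finset V) : ℝ :=
  ∑ m ∈ f.support, f.coeff m *
    (if A ⊆ m.support then
        (∏ p ∈ A, (α ^ m p - β ^ m p)) * (∏ p ∈ m.support \ A, β ^ m p)
      else 0)

lemma cfun_eq_zero {t : ℕ} (α β : ℝ) (f : MvPolynomial V ℝ) (hf : f.totalDegree ≤ t)
    (A : Finset V) (hA : t < A.card) : cfun α β f A = 0 := by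
  unfold cfun
  refine Finset.sum_eq_zero fun m hm => ?_
  rw [if_neg, mul_zero]
  intro hsub
  have h1 : A.card ≤ m.support.card := Finset.card_le_card hsub
  have h2 : m.support.card ≤ m.sum fun _ e => e := by
    rw [Finsupp.sum]
    calc m.support.card = ∑ _p ∈ m.support, 1 := by simp
      _ ≤ ∑ p ∈ m.support, m p :=
        Finset.sum_le_sum fun p hp =>
          Nat.one_le_iff_ne_zero.mpr (Finsupp.mem_support_iff.mp hp)
  have h3 := MvPolynomial.le_totalDegree hm
  omega

lemma prod_ite_subset (A S : Finset V) (g : V → ℝ) :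
    (∏ p ∈ A, if p ∈ S then g p else 0) = if A ⊆ S then ∏ p ∈ A, g p else 0 := by
  by_cases h : A ⊆ S
  · rw [if_pos h]
    exact Finset.prod_congr rfl fun p hp => if_pos (h hp)
  · rw [if_neg h]
    obtain ⟨p, hpA, hpS⟩ := Finset.not_subset.mp h
    exact Finset.prod_eq_zero hpA (if_neg hpS)

lemma decomp (α β : ℝ) (f : MvPolynomial V ℝ) (S : Finset V) :
    MvPolynomial.eval (fun p => if p ∈ S then α else β) f
      = ∑ A ∈ (Finset.univ : Finset (Finset V)),
          cfun α β f A * (if A ⊆ S then 1 else 0) := by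
  rw [MvPolynomial.eval_eq]
  have h1 : ∑ A ∈ (Finset.univ : Finset (Finset V)),
        cfun α β f A * (if A ⊆ S then 1 else 0)
      = ∑ m ∈ f.support, ∑ A ∈ (Finset.univ : Finset (Finset V)),
          f.coeff m *
            ((if A ⊆ m.support then
                (∏ p ∈ A, (α ^ m p - β ^ m p)) * (∏ p ∈ m.support \ A, β ^ m p)
              else 0) * (if A ⊆ S then 1 else 0)) := by
    simp only [cfun, Finset.sum_mul, mul_assoc]
    exact Finset.sum_comm
  rw [h1]
  refine Finset.sum_congr rfl fun m _hm => ?_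
  rw [← Finset.mul_sum]
  congr 1
  calc ∏ i ∈ m.support, (if i ∈ S then α else β) ^ m i
      = ∏ i ∈ m.support, ((if i ∈ S then α ^ m i - β ^ m i else 0) + β ^ m i) := by
        refine Finset.prod_congr rfl fun i _ => ?_
        by_cases h : i ∈ S <;> simp [h]
    _ = ∑ A ∈ m.support.powerset,
          (∏ i ∈ A, (if i ∈ S then α ^ m i - β ^ m i else 0)) *
            ∏ i ∈ m.support \ A, β ^ m i := Finset.prod_add _ _ _
    _ = ∑ A ∈ m.support.powerset,
          ((∏ i ∈ A, (α ^ m i - β ^ m i)) * (∏ i ∈ m.support \ A, β ^ m i)) *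
            (if A ⊆ S then 1 else 0) := by
        refine Finset.sum_congr rfl fun A _ => ?_
        rw [prod_ite_subset]
        by_cases h : A ⊆ S <;> simp [h]
    _ = ∑ A ∈ (Finset.univ : Finset (Finset V)),
          (if A ⊆ m.support then
              (∏ p ∈ A, (α ^ m p - β ^ m p)) * (∏ p ∈ m.support \ A, β ^ m p)
            else 0) * (if A ⊆ S then 1 else 0) := by
        rw [eq_comm]
        calc ∑ A ∈ (Finset.univ : Finset (Finset V)),
              (if A ⊆ m.support then
                  (∏ p ∈ A, (α ^ m p - β ^ m p)) * (∏ p ∈ m.support \ A, β ^ m p)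
                else 0) * (if A ⊆ S then 1 else 0)
            = ∑ A ∈ (Finset.univ : Finset (Finset V)),
                (if A ∈ m.support.powerset then
                    ((∏ p ∈ A, (α ^ m p - β ^ m p)) * (∏ p ∈ m.support \ A, β ^ m p)) *
                      (if A ⊆ S then 1 else 0)
                  else 0) := by
              refine Finset.sum_congr rfl fun A _ => ?_
              simp only [Finset.mem_powerset]
              by_cases h : A ⊆ m.support <;> simp [h]
          _ = ∑ A ∈ (Finset.univ : Finset (Finset V)) ∩ m.support.powerset,
                ((∏ p ∈ A, (α ^ m p - β ^ m p)) * (∏ p ∈ m.support \ A, β ^ m p)) *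
                  (if A ⊆ S then 1 else 0) := Finset.sum_ite_mem _ _ _
          _ = _ := by rw [Finset.univ_inter]

lemma aux_count (A : Finset V) (k : ℕ) (hak : A.card ≤ k) :
    (((Finset.univ : Finset V).powersetCard k).filter (fun S => A ⊆ S)).card
      = (Fintype.card V - A.card).choose (k - A.card) := by
  rw [← Finset.card_compl A, ← Finset.card_powersetCard]
  apply Finset.card_nbij' (fun S => S \ A) (fun T => T ∪ A)
  · intro S hS
    simp only [Finset.mem_coe, Finset.mem_filter, Finset.mem_powersetCard] at hS
    obtain ⟨⟨_, hcard⟩, hAS⟩ := hS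
    rw [Finset.mem_coe, Finset.mem_powersetCard]
    constructor
    · intro x hx
      simp only [Finset.mem_sdiff] at hx
      simp [Finset.mem_compl, hx.2]
    · rw [Finset.card_sdiff_of_subset hAS, hcard]
  · intro T hT
    rw [Finset.mem_coe, Finset.mem_powersetCard] at hT
    obtain ⟨hTc, hTcard⟩ := hT
    have hdisj : Disjoint T A := by
      rw [Finset.disjoint_right]
      intro x hxA hxT
      exact (Finset.mem_compl.mp (hTc hxT)) hxA
    simp only [Finset.mem_coe, Finset.mem_filter, Finset.mem_powersetCard]
    refine ⟨⟨Finset.subset_univ _, ?_⟩, Finset.subset_union_right⟩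
    rw [Finset.card_union_of_disjoint hdisj, hTcard, Nat.sub_add_cancel hak]
  · intro S hS
    simp only [Finset.mem_coe, Finset.mem_filter] at hS
    exact Finset.sdiff_union_of_subset hS.2
  · intro T hT
    rw [Finset.mem_coe, Finset.mem_powersetCard] at hT
    have hdisj : Disjoint T A := by
      rw [Finset.disjoint_right]
      intro x hxA hxT
      exact (Finset.mem_compl.mp (hT.1 hxT)) hxA
    show (T ∪ A) \ A = T
    rw [Finset.union_sdiff_distrib, Finset.sdiff_self, Finset.union_empty,
      Finset.sdiff_eq_self_of_disjoint hdisj]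

lemma aux_nat (A : Finset V) (k : ℕ) (hk : k ≤ Fintype.card V) :
    (((Finset.univ : Finset V).powersetCard k).filter (fun S => A ⊆ S)).card
        * (Fintype.card V).choose A.card
      = (Fintype.card V).choose k * k.choose A.card := by
  rcases le_or_gt A.card k with h | h
  · rw [aux_count A k h, Nat.choose_mul h, Nat.mul_comm]
  · have h0 : (((Finset.univ : Finset V).powersetCard k).filter (fun S => A ⊆ S)) = ∅ := by
      rw [Finset.filter_eq_empty_iff]
      intro S hS hAS
      have hle := Finset.card_le_card hAS
      rw [(Finset.mem_powersetCard.mp hS).2] at hle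
      omega
    rw [h0, Nat.choose_eq_zero_of_lt h]
    simp

lemma aux_dc (B : Finset (Finset V)) (a lam : ℕ)
    (h : ∀ T : Finset V, T.card = a → (B.filter fun b => T ⊆ b).card = lam) :
    ∑ b ∈ B, (b.card).choose a = (Fintype.card V).choose a * lam := by
  calc ∑ b ∈ B, (b.card).choose a
      = ∑ b ∈ B, ∑ A ∈ (Finset.univ : Finset V).powersetCard a,
          (if A ⊆ b then 1 else 0) := by
        refine Finset.sum_congr rfl fun b _ => ?_
        have heq : ((Finset.univ : Finset V).powersetCard a).filter (fun A => A ⊆ b)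
            = b.powersetCard a := by
          ext A
          simp only [Finset.mem_filter, Finset.mem_powersetCard, Finset.subset_univ,
            true_and]
          tauto
        rw [← Finset.card_powersetCard a b, ← heq, Finset.card_filter]
    _ = ∑ A ∈ (Finset.univ : Finset V).powersetCard a, ∑ b ∈ B,
          (if A ⊆ b then 1 else 0) := Finset.sum_comm
    _ = ∑ _A ∈ (Finset.univ : Finset V).powersetCard a, lam := by
        refine Finset.sum_congr rfl fun A hA => ?_
        rw [← Finset.card_filter, h A (Finset.mem_powersetCard.mp hA).2]
    _ = (Fintype.card V).choose a * lam := by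
        rw [Finset.sum_const, Finset.card_powersetCard, Finset.card_univ, smul_eq_mul]

end Aux

theorem stmt4 {V : Type*} [Fintype V] [DecidableEq V] (v t : ℕ)
    (hv : Fintype.card V = v) (ht : 0 < t)
    (B : Finset (Finset V)) (hB : B.Nonempty)
    (hreg : ∀ t' ≤ t, ∃ lam : ℕ, ∀ T : Finset V, T.card = t' →
      (B.filter fun b => T ⊆ b).card = lam)
    (α β : ℝ) (hab : α ≠ β)
    (f : MvPolynomial V ℝ) (hf : f.totalDegree ≤ t) :
    ∑ k ∈ B.image Finset.card,
      (((B.filter fun b => b.card = k).card : ℝ) / ((B.card : ℝ) * (Nat.choose v k : ℝ))) *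
        ∑ S ∈ Finset.powersetCard k (Finset.univ : Finset V),
          MvPolynomial.eval (fun p => if p ∈ S then α else β) f
      = (1 / (B.card : ℝ)) *
          ∑ b ∈ B, MvPolynomial.eval (fun p => if p ∈ b then α else β) f := by
  subst hv
  have hBne : (B.card : ℝ) ≠ 0 := Nat.cast_ne_zero.mpr hB.card_pos.ne'
  simp only [decomp α β f]
  have hLHS : ∀ k : ℕ,
      ∑ S ∈ Finset.powersetCard k (Finset.univ : Finset V),
          ∑ A ∈ (Finset.univ : Finset (Finset V)),
            cfun α β f A * (if A ⊆ S then 1 else 0)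
        = ∑ A ∈ (Finset.univ : Finset (Finset V)), cfun α β f A *
            ((((Finset.univ : Finset V).powersetCard k).filter
                (fun S => A ⊆ S)).card : ℝ) := by
    intro k
    rw [Finset.sum_comm]
    refine Finset.sum_congr rfl fun A _ => ?_
    rw [← Finset.mul_sum, Finset.sum_boole]
  have hRHS : ∑ b ∈ B, ∑ A ∈ (Finset.univ : Finset (Finset V)),
        cfun α β f A * (if A ⊆ b then 1 else 0)
      = ∑ A ∈ (Finset.univ : Finset (Finset V)), cfun α β f A *
          (((B.filter fun b => A ⊆ b).card : ℝ)) := by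
    rw [Finset.sum_comm]
    refine Finset.sum_congr rfl fun A _ => ?_
    rw [← Finset.mul_sum, Finset.sum_boole]
  simp only [hLHS]
  rw [hRHS, Finset.mul_sum]
  rw [show ∑ k ∈ B.image Finset.card,
        (((B.filter fun b => b.card = k).card : ℝ) /
            ((B.card : ℝ) * ((Fintype.card V).choose k : ℝ))) *
          ∑ A ∈ (Finset.univ : Finset (Finset V)), cfun α β f A *
            ((((Finset.univ : Finset V).powersetCard k).filter
                (fun S => A ⊆ S)).card : ℝ)
      = ∑ A ∈ (Finset.univ : Finset (Finset V)), ∑ k ∈ B.image Finset.card,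
          (((B.filter fun b => b.card = k).card : ℝ) /
              ((B.card : ℝ) * ((Fintype.card V).choose k : ℝ))) *
            (cfun α β f A *
              ((((Finset.univ : Finset V).powersetCard k).filter
                  (fun S => A ⊆ S)).card : ℝ)) from by
    rw [Finset.sum_comm]
    exact Finset.sum_congr rfl fun k _ => Finset.mul_sum _ _ _]
  refine Finset.sum_congr rfl fun A _ => ?_
  by_cases hAt : A.card ≤ t
  · obtain ⟨lam, hlam⟩ := hreg A.card hAt
    rw [hlam A rfl]
    have ha : A.card ≤ Fintype.card V := by
      simpa using Finset.card_le_univ A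
    have hca : (((Fintype.card V).choose A.card : ℕ) : ℝ) ≠ 0 :=
      Nat.cast_ne_zero.mpr (Nat.choose_pos ha).ne'
    have key : ∑ k ∈ B.image Finset.card,
        (((B.filter fun b => b.card = k).card : ℝ) /
            ((B.card : ℝ) * ((Fintype.card V).choose k : ℝ))) *
          ((((Finset.univ : Finset V).powersetCard k).filter
              (fun S => A ⊆ S)).card : ℝ)
        = (lam : ℝ) / (B.card : ℝ) := by
      have step1 : ∀ k ∈ B.image Finset.card,
          (((B.filter fun b => b.card = k).card : ℝ) /
              ((B.card : ℝ) * ((Fintype.card V).choose k : ℝ))) *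
            ((((Finset.univ : Finset V).powersetCard k).filter
                (fun S => A ⊆ S)).card : ℝ)
          = (((B.filter fun b => b.card = k).card : ℝ) * (k.choose A.card : ℝ)) /
              ((B.card : ℝ) * (((Fintype.card V).choose A.card : ℕ) : ℝ)) := by
        intro k hk
        obtain ⟨b, hbB, rfl⟩ := Finset.mem_image.mp hk
        have hkv : b.card ≤ Fintype.card V := by
          simpa using Finset.card_le_univ b
        have hck : (((Fintype.card V).choose b.card : ℕ) : ℝ) ≠ 0 :=
          Nat.cast_ne_zero.mpr (Nat.choose_pos hkv).ne'
        have hNid : ((((Finset.univ : Finset V).powersetCard b.card).filter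
                (fun S => A ⊆ S)).card : ℝ) * (((Fintype.card V).choose A.card : ℕ) : ℝ)
            = (((Fintype.card V).choose b.card : ℕ) : ℝ) * ((b.card).choose A.card : ℝ) := by
          exact_mod_cast congrArg Nat.cast (aux_nat A b.card hkv)
        field_simp
        linear_combination ((B.filter fun x => x.card = b.card).card : ℝ) *
          hNid
      rw [Finset.sum_congr rfl step1, ← Finset.sum_div]
      have hnat : ∑ k ∈ B.image Finset.card,
          (B.filter fun b => b.card = k).card * k.choose A.card
          = (Fintype.card V).choose A.card * lam := by
        rw [← aux_dc B A.card lam (fun T hT => hlam T hT)]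
        rw [← Finset.sum_fiberwise_of_maps_to
          (fun b hb => Finset.mem_image_of_mem Finset.card hb)
          (fun b => (b.card).choose A.card)]
        refine Finset.sum_congr rfl fun k _ => ?_
        rw [Finset.sum_congr rfl (fun b hb => by
          rw [(Finset.mem_filter.mp hb).2])]
        rw [Finset.sum_const, smul_eq_mul]
      have hsum : ∑ k ∈ B.image Finset.card,
          ((B.filter fun b => b.card = k).card : ℝ) * (k.choose A.card : ℝ)
          = (((Fintype.card V).choose A.card : ℕ) : ℝ) * (lam : ℝ) := by
        exact_mod_cast congrArg Nat.cast hnat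
      rw [hsum]
      field_simp
    calc ∑ k ∈ B.image Finset.card,
          (((B.filter fun b => b.card = k).card : ℝ) /
              ((B.card : ℝ) * ((Fintype.card V).choose k : ℝ))) *
            (cfun α β f A *
              ((((Finset.univ : Finset V).powersetCard k).filter
                  (fun S => A ⊆ S)).card : ℝ))
        = cfun α β f A * ∑ k ∈ B.image Finset.card,
            (((B.filter fun b => b.card = k).card : ℝ) /
                ((B.card : ℝ) * ((Fintype.card V).choose k : ℝ))) *
              ((((Finset.univ : Finset V).powersetCard k).filter
                  (fun S => A ⊆ S)).card : ℝ) := by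
          rw [Finset.mul_sum]
          exact Finset.sum_congr rfl fun k _ => by ring
      _ = 1 / (B.card : ℝ) * (cfun α β f A * (lam : ℝ)) := by
          rw [key]; ring
  · rw [cfun_eq_zero α β f hf A (lt_of_not_ge hAt)]
    simp
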